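/- Let G be a finite group, H ≤ G a subgroup, and d ∈ G. Let A_d be the 0–1 matrix indexed by the left coset space G/H with (xH, yH) entry 1 iff x⁻¹y ∈ HdH, and 0 otherwise. Then A_d is a permutation matrix if and only if d ∈ N_G(H), and A_d is a permutation matrix of order 2 if and only if d ∈ N_G(H) \ H and d² ∈ H. -/

import Mathlib

open scoped Classical

/-- The 0-1 matrix on the left coset space `G ⧸ H` whose `(xH, yH)` entry is `1`
iff `x⁻¹y` lies in the double coset `HdH`. -/
noncomputable def dcosetMatrix (G : Type*) [Group G] (H : Subgroup G) (d : G) :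
    Matrix (G ⧸ H) (G ⧸ H) ℂ := fun a b =>
  if ∃ x y : G, (QuotientGroup.mk x : G ⧸ H) = a ∧ (QuotientGroup.mk y : G ⧸ H) = b ∧
      ∃ h₁ h₂ : G, h₁ ∈ H ∧ h₂ ∈ H ∧ x⁻¹ * y = h₁ * d * h₂ then 1 else 0

/-- A square 0-1 matrix with exactly one 1 in each row and each column. -/
def IsPermMatrix {V : Type*} (A : Matrix V V ℂ) : Prop :=
  (∀ i j, A i j = 0 ∨ A i j = 1) ∧ (∀ i, ∃! j, A i j = 1) ∧ (∀ j, ∃! i, A i j = 1)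

lemma dcoset_zero_or_one {G : Type*} [Group G] (H : Subgroup G) (d : G) (a b : G ⧸ H) :
    dcosetMatrix G H d a b = 0 ∨ dcosetMatrix G H d a b = 1 := by
  unfold dcosetMatrix
  split_ifs <;> simp

lemma dcoset_entry_iff {G : Type*} [Group G] (H : Subgroup G) (d : G) (x y : G) :
    dcosetMatrix G H d (↑x) (↑y) = 1 ↔
      ∃ h₁ h₂ : G, h₁ ∈ H ∧ h₂ ∈ H ∧ x⁻¹ * y = h₁ * d * h₂ := by
  unfold dcosetMatrix
  split_ifs with h
  · refine ⟨fun _ => ?_, fun _ => rfl⟩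
    obtain ⟨x', y', hx', hy', h₁, h₂, hh₁, hh₂, heq⟩ := h
    have hx : x⁻¹ * x' ∈ H := by
      rw [← QuotientGroup.eq]; exact hx'.symm
    have hy : y'⁻¹ * y ∈ H := by
      rw [← QuotientGroup.eq]; exact hy'
    refine ⟨(x⁻¹ * x') * h₁, h₂ * (y'⁻¹ * y), H.mul_mem hx hh₁, H.mul_mem hh₂ hy, ?_⟩
    have hsplit : x⁻¹ * y = (x⁻¹ * x') * (x'⁻¹ * y') * (y'⁻¹ * y) := by group
    rw [hsplit, heq]; group
  · push_neg at h
    refine ⟨fun h01 => absurd h01 (by norm_num), ?_⟩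
    rintro ⟨h₁, h₂, hh₁, hh₂, heq⟩
    exact absurd heq (h x y rfl rfl h₁ h₂ hh₁ hh₂)

lemma dcoset_entry_of_norm {G : Type*} [Group G] {H : Subgroup G} {d : G}
    (hN : d ∈ Subgroup.normalizer (H : Set G)) (x y : G) :
    dcosetMatrix G H d (↑x) (↑y) = 1 ↔ (↑(x * d) : G ⧸ H) = ↑y := by
  rw [dcoset_entry_iff, QuotientGroup.eq]
  constructor
  · rintro ⟨h₁, h₂, hh₁, hh₂, heq⟩
    have h₁' : d⁻¹ * h₁ * d ∈ H := by
      have := (Subgroup.mem_normalizer_iff.mp ((Subgroup.normalizer (H : Set G)).inv_mem hN) h₁).mp hh₁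
      simpa [mul_assoc] using this
    have hre : (x * d)⁻¹ * y = (d⁻¹ * h₁ * d) * h₂ := by
      rw [mul_inv_rev, mul_assoc, heq]; group
    rw [hre]; exact H.mul_mem h₁' hh₂
  · intro hmem
    exact ⟨1, (x * d)⁻¹ * y, H.one_mem, hmem, by group⟩

noncomputable def rmulQuot {G : Type*} [Group G] (H : Subgroup G) (d : G)
    (hN : d ∈ Subgroup.normalizer (H : Set G)) : G ⧸ H → G ⧸ H :=
  Quotient.map' (· * d) (by
    intro a b hab
    rw [QuotientGroup.leftRel_apply] at hab ⊢
    have : (a * d)⁻¹ * (b * d) = d⁻¹ * (a⁻¹ * b) * d := by group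
    rw [this]
    have := (Subgroup.mem_normalizer_iff.mp ((Subgroup.normalizer (H : Set G)).inv_mem hN) _).mp hab
    simpa [mul_assoc] using this)

lemma rmulQuot_mk {G : Type*} [Group G] (H : Subgroup G) (d : G)
    (hN : d ∈ Subgroup.normalizer (H : Set G)) (x : G) : rmulQuot H d hN ↑x = ↑(x * d) := rfl

lemma dcoset_eq_ite {G : Type*} [Group G] {H : Subgroup G} {d : G}
    (hN : d ∈ Subgroup.normalizer (H : Set G)) (a b : G ⧸ H) :
    dcosetMatrix G H d a b = if b = rmulQuot H d hN a then 1 else 0 := by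
  induction a using QuotientGroup.induction_on with
  | _ x =>
    induction b using QuotientGroup.induction_on with
    | _ y =>
      rw [rmulQuot_mk]
      split_ifs with h
      · exact (dcoset_entry_of_norm hN x y).mpr h.symm
      · rcases dcoset_zero_or_one H d (↑x) (↑y) with h0 | h1
        · exact h0
        · exact absurd ((dcoset_entry_of_norm hN x y).mp h1).symm h

lemma dcoset_perm_of_norm {G : Type*} [Group G] {H : Subgroup G} {d : G}
    (hN : d ∈ Subgroup.normalizer (H : Set G)) : IsPermMatrix (dcosetMatrix G H d) := by
  refine ⟨dcoset_zero_or_one H d, ?_, ?_⟩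
  · intro i
    induction i using QuotientGroup.induction_on with
    | _ x =>
      refine ⟨↑(x * d), (dcoset_entry_of_norm hN x (x * d)).mpr rfl, ?_⟩
      intro j hj
      induction j using QuotientGroup.induction_on with
      | _ y => exact ((dcoset_entry_of_norm hN x y).mp hj).symm
  · intro j
    induction j using QuotientGroup.induction_on with
    | _ y =>
      refine ⟨↑(y * d⁻¹), (dcoset_entry_of_norm hN (y * d⁻¹) y).mpr (by
        congr 1; group), ?_⟩
      intro i hi
      induction i using QuotientGroup.induction_on with
      | _ x =>
        have hmem : (x * d)⁻¹ * y ∈ H :=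
          QuotientGroup.eq.mp ((dcoset_entry_of_norm hN x y).mp hi)
        rw [QuotientGroup.eq]
        have h2 : x⁻¹ * (y * d⁻¹) = (d * ((x * d)⁻¹ * y)⁻¹ * d⁻¹)⁻¹ := by group
        rw [h2]
        exact H.inv_mem ((Subgroup.mem_normalizer_iff.mp hN _).mp (H.inv_mem hmem))

lemma dcoset_norm_of_perm {G : Type*} [Group G] {H : Subgroup G} {d : G}
    (hP : IsPermMatrix (dcosetMatrix G H d)) : d ∈ Subgroup.normalizer (H : Set G) := by
  obtain ⟨-, hrow, hcol⟩ := hP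
  have hrd : ∀ h ∈ H, d⁻¹ * h * d ∈ H := by
    intro h hh
    obtain ⟨j, -, hj⟩ := hrow (↑(1 : G))
    have e1 : dcosetMatrix G H d (↑(1 : G)) (↑d) = 1 :=
      (dcoset_entry_iff H d 1 d).mpr ⟨1, 1, H.one_mem, H.one_mem, by group⟩
    have e2 : dcosetMatrix G H d (↑(1 : G)) (↑(h * d)) = 1 :=
      (dcoset_entry_iff H d 1 (h * d)).mpr ⟨h, 1, hh, H.one_mem, by group⟩
    have heq : (↑(h * d) : G ⧸ H) = ↑d := (hj _ e2).trans (hj _ e1).symm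
    have h4 := H.inv_mem (QuotientGroup.eq.mp heq)
    simpa [mul_inv_rev, mul_assoc] using h4
  have hld : ∀ h ∈ H, d * h * d⁻¹ ∈ H := by
    intro h hh
    obtain ⟨i, -, hi⟩ := hcol (↑(1 : G))
    have e1 : dcosetMatrix G H d (↑(d⁻¹)) (↑(1 : G)) = 1 :=
      (dcoset_entry_iff H d d⁻¹ 1).mpr ⟨1, 1, H.one_mem, H.one_mem, by group⟩
    have e2 : dcosetMatrix G H d (↑(h * d⁻¹)) (↑(1 : G)) = 1 :=
      (dcoset_entry_iff H d (h * d⁻¹) 1).mpr ⟨1, h⁻¹, H.one_mem, H.inv_mem hh, by group⟩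
    have heq : (↑(h * d⁻¹) : G ⧸ H) = ↑(d⁻¹ : G) := (hi _ e2).trans (hi _ e1).symm
    have := QuotientGroup.eq.mp heq
    have h3 : d * h⁻¹ * d⁻¹ ∈ H := by simpa [mul_inv_rev, mul_assoc] using this
    have := H.inv_mem h3
    simpa [mul_inv_rev, mul_assoc] using this
  rw [Subgroup.mem_normalizer_iff]
  intro h
  refine ⟨hld h, fun hmem => ?_⟩
  have := hrd _ hmem
  simpa [mul_assoc] using this

lemma dcoset_eq_one_iff {G : Type*} [Group G] {H : Subgroup G} {d : G}
    (hN : d ∈ Subgroup.normalizer (H : Set G)) : dcosetMatrix G H d = 1 ↔ d ∈ H := by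
  constructor
  · intro hone
    have h1 : dcosetMatrix G H d (↑(1 : G)) (↑(1 : G)) = 1 := by
      rw [hone]; simp [Matrix.one_apply]
    have := QuotientGroup.eq.mp ((dcoset_entry_of_norm hN 1 1).mp h1)
    simpa using H.inv_mem this
  · intro hd
    ext a b
    induction a using QuotientGroup.induction_on with
    | _ x =>
      induction b using QuotientGroup.induction_on with
      | _ y =>
        rw [dcoset_eq_ite hN, rmulQuot_mk]
        have hxd : (↑(x * d) : G ⧸ H) = ↑x := by
          rw [QuotientGroup.eq]
          have : (x * d)⁻¹ * x = d⁻¹ := by group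
          rw [this]; exact H.inv_mem hd
        rw [hxd, Matrix.one_apply]
        by_cases h : (↑x : G ⧸ H) = ↑y <;> simp [h, eq_comm]

lemma dcoset_sq_eq_one_iff {G : Type*} [Group G] [Fintype G] {H : Subgroup G} {d : G}
    (hN : d ∈ Subgroup.normalizer (H : Set G)) :
    dcosetMatrix G H d * dcosetMatrix G H d = 1 ↔ d ^ 2 ∈ H := by
  have hmul : ∀ a b : G ⧸ H, (dcosetMatrix G H d * dcosetMatrix G H d) a b
      = if b = rmulQuot H d hN (rmulQuot H d hN a) then 1 else 0 := by
    intro a b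
    rw [Matrix.mul_apply]
    simp only [dcoset_eq_ite hN, ite_mul, one_mul, zero_mul]
    rw [Finset.sum_ite_eq' Finset.univ (rmulQuot H d hN a)
      (fun c => if b = rmulQuot H d hN c then (1 : ℂ) else 0)]
    simp
  constructor
  · intro hone
    have h1 : (dcosetMatrix G H d * dcosetMatrix G H d) (↑(1 : G)) (↑(1 : G)) = 1 := by
      rw [hone]; simp [Matrix.one_apply]
    rw [hmul, rmulQuot_mk, rmulQuot_mk] at h1
    by_cases h : (↑(1 : G) : G ⧸ H) = ↑(1 * d * d)
    · have hdd : d * d ∈ H := by simpa using QuotientGroup.eq.mp h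
      rwa [pow_two]
    · rw [if_neg h] at h1
      exact absurd h1 (by norm_num)
  · intro hd2
    ext a b
    induction a using QuotientGroup.induction_on with
    | _ x =>
      induction b using QuotientGroup.induction_on with
      | _ y =>
        rw [hmul, rmulQuot_mk, rmulQuot_mk]
        have hxd : (↑(x * d * d) : G ⧸ H) = ↑x := by
          rw [QuotientGroup.eq]
          have : (x * d * d)⁻¹ * x = (d ^ 2)⁻¹ := by group
          rw [this]; exact H.inv_mem hd2
        rw [hxd, Matrix.one_apply]
        by_cases h : (↑x : G ⧸ H) = ↑y <;> simp [h, eq_comm]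

/-- `A_d` is a permutation matrix iff `d ∈ N_G(H)`, and has order 2 iff
moreover `d ∉ H` and `d² ∈ H`. -/
theorem stmt_6 (G : Type) [Group G] [Fintype G] (H : Subgroup G) (d : G) :
    (IsPermMatrix (dcosetMatrix G H d) ↔ d ∈ Subgroup.normalizer (H : Set G)) ∧
    ((IsPermMatrix (dcosetMatrix G H d) ∧
        dcosetMatrix G H d * dcosetMatrix G H d = 1 ∧ dcosetMatrix G H d ≠ 1) ↔
      (d ∈ Subgroup.normalizer (H : Set G) ∧ d ∉ H ∧ d ^ 2 ∈ H)) := by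
  have hiff : IsPermMatrix (dcosetMatrix G H d) ↔ d ∈ Subgroup.normalizer (H : Set G) :=
    ⟨dcoset_norm_of_perm, dcoset_perm_of_norm⟩
  refine ⟨hiff, ?_⟩
  constructor
  · rintro ⟨hP, hsq, hne⟩
    have hN := hiff.mp hP
    exact ⟨hN, fun hd => hne ((dcoset_eq_one_iff hN).mpr hd),
      (dcoset_sq_eq_one_iff hN).mp hsq⟩
  · rintro ⟨hN, hdH, hd2⟩
    exact ⟨hiff.mpr hN, (dcoset_sq_eq_one_iff hN).mpr hd2,
      fun h => hdH ((dcoset_eq_one_iff hN).mp h)⟩
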